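/- Let S = X - Y where X ~ Poisson(x) and Y ~ Poisson(y) are independent Poisson random variables, and let σ_S = sqrt(x + y) denote the standard deviation of S. Then for all integers i, σ_S · P(S = i) ≤ M, where M = sup_{u ≥ 0} sqrt(2u)·e^{-2u}·Σ_{k=0}^∞ (u^k/k!)^2; moreover the bound is attained with equality when x = y = ū and i = 0, where ū is the unique maximizer defining M. -/

import Mathlib

open scoped Nat Real ENNReal NNReal
open MeasureTheory

namespace PoissonAux

/-- coefficient as a complex constant -/
noncomputable def cf (x y : ℝ) (p : ℕ × ℕ) : ℝ := x ^ p.1 / p.1 ! * (y ^ p.2 / p.2 !)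

lemma summable_cf (x y : ℝ) (hx : 0 ≤ x) (hy : 0 ≤ y) : Summable (cf x y) :=
  (Real.summable_pow_div_factorial x).mul_of_nonneg (Real.summable_pow_div_factorial y)
    (fun a => by positivity) (fun b => by positivity)

lemma summable_exp_term (x : ℝ) (t : ℝ) :
    Summable fun a : ℕ => ‖(↑x * Complex.exp (↑t * Complex.I)) ^ a / (a ! : ℂ)‖ := by
  have h : ∀ a : ℕ, ‖(↑x * Complex.exp (↑t * Complex.I)) ^ a / (a ! : ℂ)‖
      = |x| ^ a / (a ! : ℝ) := fun a => by
    simp [Complex.norm_exp, abs_of_nonneg, norm_div, norm_pow]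
  simpa [h] using Real.summable_pow_div_factorial |x|

lemma pointwise (x y : ℝ) (n : ℤ) (t : ℝ) :
    Complex.exp (x * Complex.exp (t * Complex.I) + y * Complex.exp (-(t * Complex.I)))
      * Complex.exp (-(n * t * Complex.I))
    = ∑' p : ℕ × ℕ, ((cf x y p : ℝ) : ℂ)
        * Complex.exp ((((p.1 : ℤ) - p.2 - n) * t) * Complex.I) := by
  rw [Complex.exp_add]
  rw [show Complex.exp (x * Complex.exp (t * Complex.I))
      = ∑' a : ℕ, (↑x * Complex.exp (↑t * Complex.I)) ^ a / (a ! : ℂ) by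
    rw [Complex.exp_eq_exp_ℂ, NormedSpace.exp_eq_tsum_div]]
  rw [show Complex.exp (y * Complex.exp (-(t * Complex.I)))
      = ∑' b : ℕ, (↑y * Complex.exp (-(↑t * Complex.I))) ^ b / (b ! : ℂ) by
    rw [Complex.exp_eq_exp_ℂ, NormedSpace.exp_eq_tsum_div]]
  rw [tsum_mul_tsum_of_summable_norm (summable_exp_term x t)
    (by simpa [← Complex.exp_neg] using summable_exp_term y (-t)), ← tsum_mul_right]
  refine tsum_congr fun p => ?_
  obtain ⟨a, b⟩ := p
  have e1 : (↑x * Complex.exp (↑t * Complex.I)) ^ a = (x : ℂ) ^ a * Complex.exp (a * (↑t * Complex.I)) := by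
    rw [mul_pow, ← Complex.exp_nat_mul]
  have e2 : (↑y * Complex.exp (-(↑t * Complex.I))) ^ b = (y : ℂ) ^ b * Complex.exp (b * -(↑t * Complex.I)) := by
    rw [mul_pow, ← Complex.exp_nat_mul]
  rw [e1, e2]
  simp only [cf]
  push_cast
  rw [show ((a:ℂ) - b - n) * t * Complex.I
      = ↑a * (↑t * Complex.I) + (↑b * -(↑t * Complex.I) + -(↑n * ↑t * Complex.I)) by ring,
    Complex.exp_add, Complex.exp_add]
  ring

lemma integral_exp_int (m : ℤ) :
    (∫ t in Set.Ioc (-π) π, Complex.exp (((m : ℂ) * t) * Complex.I))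
      = if m = 0 then ((2 * π : ℝ) : ℂ) else 0 := by
  have hle : (-π : ℝ) ≤ π := by linarith [Real.pi_pos]
  rw [← intervalIntegral.integral_of_le hle]
  by_cases hm : m = 0
  · simp [hm, intervalIntegral.integral_const, two_mul]
  · rw [if_neg hm]
    have h1 : ∀ t : ℝ, ((m : ℂ) * t) * Complex.I = ((m : ℂ) * Complex.I) * t := fun t => by ring
    simp only [h1]
    rw [integral_exp_mul_complex (by simp [hm])]
    have h2 : ∀ s : ℝ, (m : ℂ) * Complex.I * s = m * ((s : ℂ) * Complex.I) := fun s => by ring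
    rw [h2, h2, Complex.exp_int_mul, Complex.exp_int_mul]
    have : Complex.exp (↑(-π : ℝ) * Complex.I) = (Complex.exp ((π : ℝ) * Complex.I))⁻¹ := by
      rw [← Complex.exp_neg]; push_cast; ring_nf
    rw [this, Complex.exp_pi_mul_I, show ((-1:ℂ))⁻¹ = -1 by norm_num, sub_self, zero_div]

lemma nnnorm_aux (c : ℝ) (m : ℤ) (t : ℝ) :
    ‖((c : ℂ)) * Complex.exp (((m : ℂ) * t) * Complex.I)‖₊ = ‖c‖₊ := by
  apply NNReal.coe_injective
  have h : ((m : ℂ) * t) * Complex.I = ((m * t : ℝ) : ℂ) * Complex.I := by push_cast; ring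
  simp [h, Complex.norm_exp_ofReal_mul_I]

lemma nnnorm_aux' (c : ℝ) (a b : ℕ) (n : ℤ) (t : ℝ) :
    ‖((c : ℂ)) * Complex.exp ((((a : ℤ) - b - n) * t) * Complex.I)‖₊ = ‖c‖₊ := by
  have hc : ((((a : ℤ) - b - n) * t) * Complex.I : ℂ)
      = ((((a : ℤ) - b - n : ℤ) : ℂ) * (t : ℂ)) * Complex.I := by push_cast; ring
  rw [hc, nnnorm_aux]

lemma integral_exp_int' (a b : ℕ) (n : ℤ) :
    (∫ t in Set.Ioc (-π) π, Complex.exp ((((a : ℤ) - b - n) * t) * Complex.I))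
      = if ((a : ℤ) - b - n) = 0 then ((2 * π : ℝ) : ℂ) else 0 := by
  have hc : ∀ t : ℝ, ((((a : ℤ) - b - n) * t) * Complex.I : ℂ)
      = ((((a : ℤ) - b - n : ℤ) : ℂ) * (t : ℂ)) * Complex.I := by
    intro t; push_cast; ring
  simp only [hc]
  exact integral_exp_int _

lemma four (x y : ℝ) (hx : 0 ≤ x) (hy : 0 ≤ y) (n : ℤ) :
    (∫ t in Set.Ioc (-π) π,
        Complex.exp (x * Complex.exp (t * Complex.I) + y * Complex.exp (-(t * Complex.I)))
          * Complex.exp (-(n * t * Complex.I)))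
      = ((2 * π * ∑' k : ℕ, cf x y (k + n.toNat, k + (-n).toNat) : ℝ) : ℂ) := by
  have hmeas : ∀ p : ℕ × ℕ, AEStronglyMeasurable
      (fun t : ℝ => ((cf x y p : ℝ) : ℂ) * Complex.exp ((((p.1 : ℤ) - p.2 - n) * t) * Complex.I))
      (volume.restrict (Set.Ioc (-π) π)) := by
    intro p
    apply Continuous.aestronglyMeasurable
    fun_prop
  have hcf : Summable fun p : ℕ × ℕ => ‖cf x y p‖₊ := by
    rw [← NNReal.summable_coe]
    have : ∀ p : ℕ × ℕ, ((‖cf x y p‖₊ : ℝ)) = cf x y p := by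
      intro p
      rw [coe_nnnorm, Real.norm_eq_abs, abs_of_nonneg]
      exact by unfold cf; positivity
    simpa [this] using summable_cf x y hx hy
  have hnormint : (∑' p : ℕ × ℕ, ∫⁻ t in Set.Ioc (-π) π,
      ‖((cf x y p : ℝ) : ℂ) * Complex.exp ((((p.1 : ℤ) - p.2 - n) * t) * Complex.I)‖₊) ≠ ⊤ := by
    have heq : ∀ p : ℕ × ℕ, (∫⁻ t in Set.Ioc (-π) π,
        ‖((cf x y p : ℝ) : ℂ) * Complex.exp ((((p.1 : ℤ) - p.2 - n) * t) * Complex.I)‖₊)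
        = (‖cf x y p‖₊ : ℝ≥0∞) * volume (Set.Ioc (-π : ℝ) π) := by
      intro p
      rw [show (fun t : ℝ => (‖((cf x y p : ℝ) : ℂ)
          * Complex.exp ((((p.1 : ℤ) - p.2 - n) * t) * Complex.I)‖₊ : ℝ≥0∞))
          = fun _ : ℝ => (‖cf x y p‖₊ : ℝ≥0∞) by
        funext t; rw [nnnorm_aux']]
      exact setLIntegral_const _ _
    simp only [heq]
    rw [ENNReal.tsum_mul_right]
    exact ENNReal.mul_ne_top (ENNReal.tsum_coe_ne_top_iff_summable.2 hcf)
      (by simp [Real.volume_Ioc])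
  simp only [pointwise x y n]
  rw [integral_tsum hmeas hnormint]
  have hint : ∀ p : ℕ × ℕ, (∫ t in Set.Ioc (-π) π, ((cf x y p : ℝ) : ℂ)
      * Complex.exp ((((p.1 : ℤ) - p.2 - n) * t) * Complex.I))
      = ((cf x y p : ℝ) : ℂ) * (if ((p.1 : ℤ) - p.2 - n) = 0 then ((2 * π : ℝ) : ℂ) else 0) := by
    intro p
    rw [MeasureTheory.integral_const_mul, integral_exp_int']
  simp only [hint]
  set g : ℕ → ℕ × ℕ := fun k => (k + n.toNat, k + (-n).toNat) with hg
  have hginj : Function.Injective g := by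
    intro k1 k2 h
    simp only [hg, Prod.ext_iff] at h
    omega
  have hsupp : (Function.support fun p : ℕ × ℕ => ((cf x y p : ℝ) : ℂ)
      * (if ((p.1 : ℤ) - p.2 - n) = 0 then ((2 * π : ℝ) : ℂ) else 0)) ⊆ Set.range g := by
    rintro ⟨a, b⟩ hp
    by_cases h : ((a : ℤ) - b - n) = 0
    · exact ⟨min a b, by simp only [hg, Prod.ext_iff]; constructor <;> omega⟩
    · simp [h] at hp
  rw [← hginj.tsum_eq hsupp]
  have hcond : ∀ k : ℕ, (((g k).1 : ℤ) - (g k).2 - n) = 0 := by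
    intro k; simp only [hg]; push_cast; omega
  calc (∑' k : ℕ, ((cf x y (g k) : ℝ) : ℂ)
        * (if (((g k).1 : ℤ) - (g k).2 - n) = 0 then ((2 * π : ℝ) : ℂ) else 0))
      = ∑' k : ℕ, ((cf x y (g k) : ℝ) : ℂ) * ((2 * π : ℝ) : ℂ) := by
        refine tsum_congr fun k => ?_; rw [if_pos (hcond k)]
    _ = (∑' k : ℕ, ((cf x y (g k) : ℝ) : ℂ)) * ((2 * π : ℝ) : ℂ) := tsum_mul_right
    _ = ((2 * π * ∑' k : ℕ, cf x y (k + n.toNat, k + (-n).toNat) : ℝ) : ℂ) := by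
        rw [← Complex.ofReal_tsum]; push_cast; ring

lemma norm_integrand (x y : ℝ) (n : ℤ) (t : ℝ) :
    ‖Complex.exp (x * Complex.exp (t * Complex.I) + y * Complex.exp (-(t * Complex.I)))
      * Complex.exp (-(n * t * Complex.I))‖ = Real.exp ((x + y) * Real.cos t) := by
  rw [norm_mul, Complex.norm_exp, Complex.norm_exp,
    ← Real.exp_add]
  congr 1
  have h1 : (-(↑t * Complex.I)) = ((-t : ℝ) : ℂ) * Complex.I := by push_cast; ring
  rw [Complex.add_re, h1, Complex.re_ofReal_mul, Complex.re_ofReal_mul,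
    Complex.exp_ofReal_mul_I_re, Complex.exp_ofReal_mul_I_re, Real.cos_neg]
  simp [Complex.neg_re, Complex.mul_re]
  ring

lemma integrand2_eq (m : ℝ) (t : ℝ) :
    Complex.exp (m * Complex.exp (t * Complex.I) + m * Complex.exp (-(t * Complex.I)))
      * Complex.exp (-(((0 : ℤ) : ℂ) * t * Complex.I))
    = ((Real.exp (2 * m * Real.cos t) : ℝ) : ℂ) := by
  rw [show (-(((0 : ℤ) : ℂ) * t * Complex.I)) = 0 by push_cast; ring, Complex.exp_zero, mul_one]
  rw [Complex.ofReal_exp]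
  congr 1
  have h1 : (-(↑t * Complex.I)) = ((-t : ℝ) : ℂ) * Complex.I := by push_cast; ring
  rw [h1, Complex.exp_mul_I, Complex.exp_mul_I]
  push_cast
  rw [Complex.cos_neg, Complex.sin_neg, ← Complex.ofReal_cos]
  ring

lemma qsum_le (x y : ℝ) (hx : 0 ≤ x) (hy : 0 ≤ y) (n : ℤ) :
    (∑' k : ℕ, cf x y (k + n.toNat, k + (-n).toNat))
      ≤ ∑' k : ℕ, cf ((x + y) / 2) ((x + y) / 2) (k, k) := by
  have hm : (0 : ℝ) ≤ (x + y) / 2 := by linarith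
  have h1 := four x y hx hy n
  have h2 := four ((x + y) / 2) ((x + y) / 2) hm hm 0
  -- rewrite h2's RHS sum index
  simp only [Int.toNat_zero, neg_zero, add_zero] at h2
  -- real integral of the norm
  have h3 : (∫ t in Set.Ioc (-π) π, Real.exp ((x + y) * Real.cos t))
      = 2 * π * ∑' k : ℕ, cf ((x + y) / 2) ((x + y) / 2) (k, k) := by
    have := h2
    rw [show (fun t : ℝ => Complex.exp (((x + y) / 2 : ℝ) * Complex.exp (t * Complex.I)
        + ((x + y) / 2 : ℝ) * Complex.exp (-(t * Complex.I)))
        * Complex.exp (-(((0 : ℤ) : ℂ) * t * Complex.I)))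
        = fun t : ℝ => ((Real.exp ((x + y) * Real.cos t) : ℝ) : ℂ) by
      funext t
      rw [integrand2_eq]
      congr 2
      ring] at this
    rw [show (∫ t in Set.Ioc (-π) π, ((Real.exp ((x + y) * Real.cos t) : ℝ) : ℂ))
        = ((∫ t in Set.Ioc (-π) π, Real.exp ((x + y) * Real.cos t) : ℝ) : ℂ)
      from integral_ofReal] at this
    exact_mod_cast this
  have hq0 : (0 : ℝ) ≤ ∑' k : ℕ, cf x y (k + n.toNat, k + (-n).toNat) := by
    apply tsum_nonneg
    intro k
    unfold cf
    positivity
  have key : 2 * π * (∑' k : ℕ, cf x y (k + n.toNat, k + (-n).toNat))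
      ≤ 2 * π * ∑' k : ℕ, cf ((x + y) / 2) ((x + y) / 2) (k, k) := by
    calc 2 * π * (∑' k : ℕ, cf x y (k + n.toNat, k + (-n).toNat))
        = ‖((2 * π * ∑' k : ℕ, cf x y (k + n.toNat, k + (-n).toNat) : ℝ) : ℂ)‖ := by
          rw [Complex.norm_real, Real.norm_eq_abs, abs_of_nonneg]
          positivity
      _ = ‖∫ t in Set.Ioc (-π) π,
            Complex.exp (x * Complex.exp (t * Complex.I) + y * Complex.exp (-(t * Complex.I)))
              * Complex.exp (-(n * t * Complex.I))‖ := by rw [h1]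
      _ ≤ ∫ t in Set.Ioc (-π) π,
            ‖Complex.exp (x * Complex.exp (t * Complex.I) + y * Complex.exp (-(t * Complex.I)))
              * Complex.exp (-(n * t * Complex.I))‖ :=
          MeasureTheory.norm_integral_le_integral_norm _
      _ = ∫ t in Set.Ioc (-π) π, Real.exp ((x + y) * Real.cos t) := by
          simp only [norm_integrand]
      _ = 2 * π * ∑' k : ℕ, cf ((x + y) / 2) ((x + y) / 2) (k, k) := h3
  have hπ : (0 : ℝ) < 2 * π := by positivity
  exact le_of_mul_le_mul_left key hπ

lemma ginj (n : ℤ) :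
    Function.Injective (fun k : ℕ => ((k + n.toNat, k + (-n).toNat) : ℕ × ℕ)) := by
  intro k1 k2 h
  simp only [Prod.ext_iff] at h
  omega

noncomputable def qf (x y : ℝ) (n : ℤ) : ℝ := ∑' k : ℕ, cf x y (k + n.toNat, k + (-n).toNat)

lemma summable_qf (x y : ℝ) (hx : 0 ≤ x) (hy : 0 ≤ y) (n : ℤ) :
    Summable (fun k : ℕ => cf x y (k + n.toNat, k + (-n).toNat)) :=
  (summable_cf x y hx hy).comp_injective (ginj n)

lemma qf_nonneg (x y : ℝ) (hx : 0 ≤ x) (hy : 0 ≤ y) (n : ℤ) : 0 ≤ qf x y n := by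
  apply tsum_nonneg
  intro k
  unfold cf
  positivity

lemma qf_le (x y : ℝ) (hx : 0 ≤ x) (hy : 0 ≤ y) (n : ℤ) :
    qf x y n ≤ ∑' k : ℕ, (((x + y) / 2) ^ k / (k ! : ℝ)) ^ 2 := by
  refine le_trans (qsum_le x y hx hy n) (le_of_eq (tsum_congr fun k => ?_))
  unfold cf
  simp only
  rw [pow_two]

lemma qf_zero (u : ℝ) : qf u u 0 = ∑' k : ℕ, (u ^ k / (k ! : ℝ)) ^ 2 := by
  unfold qf
  refine tsum_congr fun k => ?_
  unfold cf
  simp only [Int.toNat_zero, neg_zero, add_zero]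
  rw [pow_two]

/-- the bijection between `ℤ × ℕ` (difference, min) and `ℕ × ℕ` -/
def zEquiv : ℤ × ℕ ≃ ℕ × ℕ where
  toFun p := (p.2 + p.1.toNat, p.2 + (-p.1).toNat)
  invFun q := ((q.1 : ℤ) - q.2, min q.1 q.2)
  left_inv p := by
    obtain ⟨n, k⟩ := p
    simp only [Prod.ext_iff]
    constructor <;> [push_cast; skip] <;> omega
  right_inv q := by
    obtain ⟨a, b⟩ := q
    simp only [Prod.ext_iff]
    constructor <;> omega

lemma poisson_tsum (x : ℝ) (hx : 0 ≤ x) :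
    (∑' k : ℕ, ENNReal.ofReal (Real.exp (-x) * x ^ k / (k ! : ℝ))) = 1 := by
  have hs : Summable (fun k : ℕ => Real.exp (-x) * x ^ k / (k ! : ℝ)) := by
    simp_rw [mul_div_assoc]
    exact (Real.summable_pow_div_factorial x).mul_left _
  rw [← ENNReal.ofReal_tsum_of_nonneg (fun k => by positivity) hs]
  have hexp : (∑' k : ℕ, Real.exp (-x) * x ^ k / (k ! : ℝ)) = 1 := by
    have h1 : Real.exp x = ∑' n : ℕ, x ^ n / n ! := by
      rw [Real.exp_eq_exp_ℝ, NormedSpace.exp_eq_tsum_div]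
    simp_rw [mul_div_assoc]
    rw [tsum_mul_left, ← h1, ← Real.exp_add]
    simp
  rw [hexp, ENNReal.ofReal_one]

end PoissonAux

open MeasureTheory ProbabilityTheory

/-- `M(u) = √(2u) e^{-2u} Σ_k (u^k/k!)²`. -/
noncomputable def Mfun (u : ℝ) : ℝ :=
  Real.sqrt (2 * u) * Real.exp (-2 * u) * ∑' k : ℕ, (u ^ k / (Nat.factorial k : ℝ)) ^ 2

/-- `M = sup_{u ≥ 0} M(u)`. -/
noncomputable def Mconst : ℝ := sSup {r : ℝ | ∃ u : ℝ, 0 ≤ u ∧ r = Mfun u}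

lemma Mconst_eq (ub : ℝ) (hub0 : 0 ≤ ub) (hubmax : ∀ u : ℝ, 0 ≤ u → Mfun u ≤ Mfun ub) :
    Mconst = Mfun ub := by
  have hne : Set.Nonempty {r : ℝ | ∃ u : ℝ, 0 ≤ u ∧ r = Mfun u} := ⟨Mfun 0, 0, le_refl (0:ℝ), rfl⟩
  have hbdd : BddAbove {r : ℝ | ∃ u : ℝ, 0 ≤ u ∧ r = Mfun u} :=
    ⟨Mfun ub, by rintro r ⟨u, hu, rfl⟩; exact hubmax u hu⟩
  refine le_antisymm (csSup_le hne ?_) (le_csSup hbdd ⟨ub, hub0, rfl⟩)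
  rintro r ⟨u, hu, rfl⟩
  exact hubmax u hu

theorem poisson_difference_bound
    {Ω : Type*} [MeasurableSpace Ω] (μ : Measure Ω) [IsProbabilityMeasure μ]
    (x y : ℝ) (hx : 0 ≤ x) (hy : 0 ≤ y)
    (X Y : Ω → ℕ) (hXY : IndepFun X Y μ)
    (hX : ∀ k : ℕ, μ {ω | X ω = k} =
      ENNReal.ofReal (Real.exp (-x) * x ^ k / (Nat.factorial k : ℝ)))
    (hY : ∀ k : ℕ, μ {ω | Y ω = k} =
      ENNReal.ofReal (Real.exp (-y) * y ^ k / (Nat.factorial k : ℝ)))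
    (ub : ℝ) (hub0 : 0 ≤ ub)
    (hubmax : ∀ u : ℝ, 0 ≤ u → Mfun u ≤ Mfun ub)
    (hubuniq : ∀ v : ℝ, 0 ≤ v → (∀ u : ℝ, 0 ≤ u → Mfun u ≤ Mfun v) → v = ub) :
    (∀ i : ℤ, Real.sqrt (x + y) *
        (μ {ω | (X ω : ℤ) - (Y ω : ℤ) = i}).toReal ≤ Mconst) ∧
    (x = ub → y = ub →
      Real.sqrt (x + y) * (μ {ω | (X ω : ℤ) - (Y ω : ℤ) = 0}).toReal = Mconst) := by
  clear hubuniq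
  have hm : (0:ℝ) ≤ (x + y) / 2 := by linarith
  set A : ℤ → ℕ → Set Ω := fun n k =>
    {ω | X ω = k + n.toNat} ∩ {ω | Y ω = k + (-n).toNat} with hA
  have hBA : ∀ n : ℤ, {ω | (X ω : ℤ) - (Y ω : ℤ) = n} = ⋃ k : ℕ, A n k := by
    intro n
    ext ω
    simp only [hA, Set.mem_setOf_eq, Set.mem_iUnion, Set.mem_inter_iff]
    constructor
    · intro h
      exact ⟨min (X ω) (Y ω), by omega, by omega⟩
    · rintro ⟨k, h1, h2⟩
      omega
  have hAval2 : ∀ (n : ℤ) (k : ℕ), μ (A n k)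
      = ENNReal.ofReal (Real.exp (-x) * x ^ (k + n.toNat) / ((k + n.toNat)! : ℝ))
        * ENNReal.ofReal (Real.exp (-y) * y ^ (k + (-n).toNat) / ((k + (-n).toNat)! : ℝ)) := by
    intro n k
    have hpre : A n k = X ⁻¹' {k + n.toNat} ∩ Y ⁻¹' {k + (-n).toNat} := rfl
    rw [hpre, hXY.measure_inter_preimage_eq_mul _ _ (measurableSet_singleton _)
      (measurableSet_singleton _)]
    rw [show X ⁻¹' {k + n.toNat} = {ω | X ω = k + n.toNat} from rfl,
      show Y ⁻¹' {k + (-n).toNat} = {ω | Y ω = k + (-n).toNat} from rfl, hX, hY]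
  have hAval : ∀ (n : ℤ) (k : ℕ), μ (A n k)
      = ENNReal.ofReal (Real.exp (-(x + y))
          * PoissonAux.cf x y (k + n.toNat, k + (-n).toNat)) := by
    intro n k
    rw [hAval2 n k, ← ENNReal.ofReal_mul (by positivity)]
    congr 1
    unfold PoissonAux.cf
    simp only
    rw [show -(x + y) = -x + -y by ring, Real.exp_add]
    ring
  have hμsum : ∀ n : ℤ, (∑' k : ℕ, μ (A n k))
      = ENNReal.ofReal (Real.exp (-(x + y)) * PoissonAux.qf x y n) := by
    intro n
    simp only [hAval]
    rw [← ENNReal.ofReal_tsum_of_nonneg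
      (fun k => by
        have := PoissonAux.qf_nonneg x y hx hy n
        unfold PoissonAux.cf
        positivity)
      ((PoissonAux.summable_qf x y hx hy n).mul_left _)]
    congr 1
    rw [PoissonAux.qf, tsum_mul_left]
  have hmuB_le : ∀ n : ℤ, μ {ω | (X ω : ℤ) - (Y ω : ℤ) = n}
      ≤ ENNReal.ofReal (Real.exp (-(x + y)) * PoissonAux.qf x y n) := by
    intro n
    rw [hBA n]
    exact le_of_le_of_eq (measure_iUnion_le _) (hμsum n)
  have hMconst : Mconst = Mfun ub := Mconst_eq ub hub0 hubmax
  constructor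
  · -- inequality
    intro i
    have hqnn := PoissonAux.qf_nonneg x y hx hy i
    have h1 : (μ {ω | (X ω : ℤ) - (Y ω : ℤ) = i}).toReal
        ≤ Real.exp (-(x + y)) * PoissonAux.qf x y i :=
      ENNReal.toReal_le_of_le_ofReal (mul_nonneg (Real.exp_pos _).le hqnn) (hmuB_le i)
    calc Real.sqrt (x + y) * (μ {ω | (X ω : ℤ) - (Y ω : ℤ) = i}).toReal
        ≤ Real.sqrt (x + y) * (Real.exp (-(x + y)) * PoissonAux.qf x y i) :=
          mul_le_mul_of_nonneg_left h1 (Real.sqrt_nonneg _)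
      _ ≤ Real.sqrt (x + y) * (Real.exp (-(x + y))
            * ∑' k : ℕ, (((x + y) / 2) ^ k / (k ! : ℝ)) ^ 2) := by
          apply mul_le_mul_of_nonneg_left _ (Real.sqrt_nonneg _)
          exact mul_le_mul_of_nonneg_left (PoissonAux.qf_le x y hx hy i) (Real.exp_pos _).le
      _ = Mfun ((x + y) / 2) := by
          rw [Mfun, show (2:ℝ) * ((x + y) / 2) = x + y by ring,
            show (-2:ℝ) * ((x + y) / 2) = -(x + y) by ring]
          ring
      _ ≤ Mfun ub := hubmax _ hm
      _ = Mconst := hMconst.symm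
  · -- equality
    intro hxu hyu
    have hsum_r : (∑' n : ℤ,
        ENNReal.ofReal (Real.exp (-(x + y)) * PoissonAux.qf x y n)) = 1 := by
      calc (∑' n : ℤ, ENNReal.ofReal (Real.exp (-(x + y)) * PoissonAux.qf x y n))
          = ∑' n : ℤ, ∑' k : ℕ, μ (A n k) := tsum_congr fun n => (hμsum n).symm
        _ = ∑' p : ℤ × ℕ, μ (A p.1 p.2) := ENNReal.tsum_prod.symm
        _ = ∑' q : ℕ × ℕ, ENNReal.ofReal (Real.exp (-x) * x ^ q.1 / (q.1 ! : ℝ))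
              * ENNReal.ofReal (Real.exp (-y) * y ^ q.2 / (q.2 ! : ℝ)) := by
            rw [← PoissonAux.zEquiv.tsum_eq (fun q : ℕ × ℕ =>
              ENNReal.ofReal (Real.exp (-x) * x ^ q.1 / (q.1 ! : ℝ))
                * ENNReal.ofReal (Real.exp (-y) * y ^ q.2 / (q.2 ! : ℝ)))]
            exact tsum_congr fun p => hAval2 p.1 p.2
        _ = (∑' a : ℕ, ENNReal.ofReal (Real.exp (-x) * x ^ a / (a ! : ℝ)))
              * (∑' b : ℕ, ENNReal.ofReal (Real.exp (-y) * y ^ b / (b ! : ℝ))) := by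
            rw [ENNReal.tsum_prod']
            simp_rw [ENNReal.tsum_mul_left]
            rw [ENNReal.tsum_mul_right]
        _ = 1 := by rw [PoissonAux.poisson_tsum x hx, PoissonAux.poisson_tsum y hy, one_mul]
    have hcover : (1 : ℝ≥0∞) ≤ ∑' n : ℤ, μ {ω | (X ω : ℤ) - (Y ω : ℤ) = n} := by
      have hu : (Set.univ : Set Ω) ⊆ ⋃ n : ℤ, {ω | (X ω : ℤ) - (Y ω : ℤ) = n} :=
        fun ω _ => Set.mem_iUnion.2 ⟨(X ω : ℤ) - (Y ω : ℤ), rfl⟩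
      calc (1 : ℝ≥0∞) = μ Set.univ := (measure_univ).symm
        _ ≤ μ (⋃ n : ℤ, {ω | (X ω : ℤ) - (Y ω : ℤ) = n}) := measure_mono hu
        _ ≤ ∑' n : ℤ, μ {ω | (X ω : ℤ) - (Y ω : ℤ) = n} := measure_iUnion_le _
    have hfin : (∑' n : ℤ, μ {ω | (X ω : ℤ) - (Y ω : ℤ) = n}) ≠ ⊤ := by
      refine ne_top_of_le_ne_top ENNReal.one_ne_top ?_
      calc (∑' n : ℤ, μ {ω | (X ω : ℤ) - (Y ω : ℤ) = n})
          ≤ ∑' n : ℤ, ENNReal.ofReal (Real.exp (-(x + y)) * PoissonAux.qf x y n) :=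
            ENNReal.tsum_le_tsum hmuB_le
        _ = 1 := hsum_r
    have hB0 : μ {ω | (X ω : ℤ) - (Y ω : ℤ) = 0}
        = ENNReal.ofReal (Real.exp (-(x + y)) * PoissonAux.qf x y 0) := by
      by_contra hne
      have hlt := ENNReal.tsum_lt_tsum hfin hmuB_le ((hmuB_le 0).lt_of_ne hne)
      rw [hsum_r] at hlt
      exact absurd hcover (not_le.2 hlt)
    rw [hB0, ENNReal.toReal_ofReal
      (mul_nonneg (Real.exp_pos _).le (PoissonAux.qf_nonneg x y hx hy 0))]
    rw [hxu, hyu, hMconst, PoissonAux.qf_zero, Mfun,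
      show (2:ℝ) * ub = ub + ub by ring, show (-2:ℝ) * ub = -(ub + ub) by ring]
    ring
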